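/- Let T be a tree and Z a set of vertices with α(T) > α(T - Z). Then there exist two (possibly equal) vertices u, v ∈ Z ∩ V(T) such that α(T) > α(T - {u, v}). -/

import Mathlib

set_option linter.unusedSectionVars false

open SimpleGraph

/-- The maximum size of an independent set of `G` contained in the vertex set `A`
(i.e. the independence number of the induced subgraph `G[A]`). -/
noncomputable def alphaOn {V : Type*} [Fintype V] (G : SimpleGraph V) (A : Set V) : ℕ :=
  sSup {n | ∃ s : Finset V, ↑s ⊆ A ∧ (↑s : Set V).Pairwise (fun a b => ¬ G.Adj a b) ∧ s.card = n}

/-- The open neighborhood of a set of vertices. -/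
def nbhd {V : Type*} (G : SimpleGraph V) (S : Set V) : Set V :=
  {v | v ∉ S ∧ ∃ u ∈ S, G.Adj u v}

/-- `v` is α-critical in the induced subgraph `G[A]`. -/
def critOn {V : Type*} [Fintype V] (G : SimpleGraph V) (A : Set V) (v : V) : Prop :=
  alphaOn G A = 1 + alphaOn G (A \ {v})

/-- For a tree `T` rooted at `r`, the vertex set of the subtree rooted at `a`:
those vertices reachable from `a` without passing through `r`. -/
def descend {V : Type*} (T : SimpleGraph V) (r a : V) : Set V :=
  {v | ∃ p : T.Walk a v, r ∉ p.support}

/-- The connected component of `v₀` in `G - X`: vertices reachable from `v₀` avoiding `X`. -/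
def avoidComp {V : Type*} (G : SimpleGraph V) (X : Set V) (v₀ : V) : Set V :=
  {v | ∃ p : G.Walk v₀ v, ∀ x ∈ p.support, x ∉ X}

/-- Any tree admits a proper 2-coloring. -/
private lemma tree_coloring {V : Type*} [DecidableEq V] {T : SimpleGraph V} (hT : T.IsTree) :
    ∃ c : V → Bool, ∀ {u v : V}, T.Adj u v → c u ≠ c v := by
  obtain ⟨r⟩ := hT.isConnected.nonempty
  choose p hp hup using fun v => hT.existsUnique_path r v
  refine ⟨fun v => (p v).length.bodd, ?_⟩
  intro u v ha
  have key : (p v).length = (p u).length + 1 ∨ (p u).length = (p v).length + 1 := by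
    by_cases hu : u ∈ (p v).support
    · left
      have h1 : ((p v).takeUntil u hu).IsPath := (hp v).takeUntil hu
      have h2 : (p v).takeUntil u hu = p u := hup u _ h1
      have h3 : ((p v).dropUntil u hu).IsPath := (hp v).dropUntil hu
      have hedge : (Walk.cons ha Walk.nil : T.Walk u v).IsPath := by
        simp [Walk.cons_isPath_iff, ha.ne]
      have h4 : (p v).dropUntil u hu = Walk.cons ha Walk.nil := by
        have := hT.IsAcyclic.path_unique ⟨_, h3⟩ ⟨_, hedge⟩
        exact congrArg Subtype.val this
      have h5 := congrArg Walk.length ((p v).take_spec hu)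
      rw [Walk.length_append, h2, h4] at h5
      simp only [Walk.length_cons, Walk.length_nil] at h5
      omega
    · right
      have h1 : ((p v).concat ha.symm).IsPath := by
        rw [← Walk.isPath_reverse_iff, Walk.reverse_concat]
        exact (hp v).reverse.cons (by simpa [Walk.support_reverse] using hu)
      have h2 : (p v).concat ha.symm = p u := hup u _ h1
      have := congrArg Walk.length h2
      rw [Walk.length_concat] at this
      omega
  show ¬ (p u).length.bodd = (p v).length.bodd
  rcases key with k | k <;> rw [k] <;> simp [Nat.bodd_succ]

section helpers
variable {V : Type*} [Fintype V] [DecidableEq V]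

private lemma alphaOn_bddAbove (T : SimpleGraph V) (A : Set V) :
    BddAbove {n | ∃ s : Finset V, ↑s ⊆ A ∧
      (↑s : Set V).Pairwise (fun a b => ¬ T.Adj a b) ∧ s.card = n} := by
  refine ⟨Fintype.card V, ?_⟩
  rintro n ⟨s, -, -, rfl⟩
  simpa using Finset.card_le_univ s

private lemma exists_maxIndep (T : SimpleGraph V) (A : Set V) :
    ∃ s : Finset V, ↑s ⊆ A ∧ (↑s : Set V).Pairwise (fun a b => ¬ T.Adj a b) ∧
      s.card = alphaOn T A := by
  have hne : {n | ∃ s : Finset V, ↑s ⊆ A ∧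
      (↑s : Set V).Pairwise (fun a b => ¬ T.Adj a b) ∧ s.card = n}.Nonempty :=
    ⟨0, ⟨∅, by simp, by simp, by simp⟩⟩
  exact Nat.sSup_mem hne (alphaOn_bddAbove T A)

private lemma le_alphaOn (T : SimpleGraph V) {A : Set V} {s : Finset V} (h1 : ↑s ⊆ A)
    (h2 : (↑s : Set V).Pairwise (fun a b => ¬ T.Adj a b)) : s.card ≤ alphaOn T A :=
  le_csSup (alphaOn_bddAbove T A) ⟨s, h1, h2, rfl⟩

/-- a maximum independent set -/
private def MaxIS (T : SimpleGraph V) (M : Finset V) : Prop :=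
  (↑M : Set V).Pairwise (fun a b => ¬ T.Adj a b) ∧ M.card = alphaOn T Set.univ

private def meetF (c : V → Bool) (M N : Finset V) : Finset V :=
  (M ∪ N).filter (fun x => c x = true) ∪ (M ∩ N).filter (fun x => c x = false)

private lemma mem_meetF {c : V → Bool} {M N : Finset V} {x : V} :
    x ∈ meetF c M N ↔
      (c x = true ∧ (x ∈ M ∨ x ∈ N)) ∨ (c x = false ∧ (x ∈ M ∧ x ∈ N)) := by
  simp [meetF, Finset.mem_union, Finset.mem_inter, Finset.mem_filter]
  tauto

private lemma meetF_indep {T : SimpleGraph V} {c : V → Bool}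
    (hc : ∀ {u v : V}, T.Adj u v → c u ≠ c v) {M N : Finset V}
    (hM : (↑M : Set V).Pairwise (fun a b => ¬ T.Adj a b))
    (hN : (↑N : Set V).Pairwise (fun a b => ¬ T.Adj a b)) :
    (↑(meetF c M N) : Set V).Pairwise (fun a b => ¬ T.Adj a b) := by
  intro x hx y hy hne hadj
  rw [Finset.mem_coe, mem_meetF] at hx hy
  have hcc := hc hadj
  have key : ∀ a b : V, T.Adj a b → c a = true → (a ∈ M ∨ a ∈ N) →
      (b ∈ M ∧ b ∈ N) → False := by
    intro a b hab hca haMN ⟨hbM, hbN⟩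
    have hne' : a ≠ b := fun h => (hc hab) (by rw [h])
    rcases haMN with haM | haN
    · exact hM (Finset.mem_coe.mpr haM) (Finset.mem_coe.mpr hbM) hne' hab
    · exact hN (Finset.mem_coe.mpr haN) (Finset.mem_coe.mpr hbN) hne' hab
  rcases hx with ⟨hcx, hxMN⟩ | ⟨hcx, hxMN⟩ <;> rcases hy with ⟨hcy, hyMN⟩ | ⟨hcy, hyMN⟩
  · exact hcc (by rw [hcx, hcy])
  · exact key x y hadj hcx hxMN hyMN
  · exact key y x hadj.symm hcy hyMN hxMN
  · exact hcc (by rw [hcx, hcy])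

private lemma meetF_card (c : V → Bool) (M N : Finset V) :
    (meetF c M N).card + (meetF (fun x => !c x) M N).card = M.card + N.card := by
  have h1 : meetF c M N ∪ meetF (fun x => !c x) M N = M ∪ N := by
    ext x; by_cases hx : c x = true <;>
      simp [mem_meetF, Finset.mem_union, hx] <;> tauto
  have h2 : meetF c M N ∩ meetF (fun x => !c x) M N = M ∩ N := by
    ext x; by_cases hx : c x = true <;>
      simp [mem_meetF, Finset.mem_inter, hx] <;> tauto
  calc (meetF c M N).card + (meetF (fun x => !c x) M N).card
      = (meetF c M N ∪ meetF (fun x => !c x) M N).card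
        + (meetF c M N ∩ meetF (fun x => !c x) M N).card :=
        (Finset.card_union_add_card_inter _ _).symm
    _ = (M ∪ N).card + (M ∩ N).card := by rw [h1, h2]
    _ = M.card + N.card := Finset.card_union_add_card_inter _ _

private lemma meetF_maxIS {T : SimpleGraph V} {c : V → Bool}
    (hc : ∀ {u v : V}, T.Adj u v → c u ≠ c v) {M N : Finset V}
    (hM : MaxIS T M) (hN : MaxIS T N) : MaxIS T (meetF c M N) := by
  have hc' : ∀ {u v : V}, T.Adj u v → (!c u) ≠ (!c v) := by
    intro u v h hh
    exact hc h (by simpa using hh)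
  have i1 := meetF_indep hc hM.1 hN.1
  have i2 := meetF_indep hc' hM.1 hN.1
  have l1 : (meetF c M N).card ≤ alphaOn T Set.univ :=
    le_alphaOn T (by simp) i1
  have l2 : (meetF (fun x => !c x) M N).card ≤ alphaOn T Set.univ :=
    le_alphaOn T (by simp) i2
  have hcard := meetF_card c M N
  rw [hM.2, hN.2] at hcard
  exact ⟨i1, by omega⟩

/-- Folding meets: build a maximum independent set avoiding the true-colored set `U`
and all of the false-colored set `S`. -/
private lemma fold_meet {T : SimpleGraph V} {c : V → Bool}
    (hc : ∀ {u v : V}, T.Adj u v → c u ≠ c v) (U : Finset V)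
    (hU : ∀ w ∈ U, c w = true) (S : Finset V) (hS : ∀ v ∈ S, c v = false)
    (hbase : ∃ M, MaxIS T M ∧ ∀ w ∈ U, w ∉ M)
    (hex : ∀ v ∈ S, ∃ M, MaxIS T M ∧ (∀ w ∈ U, w ∉ M) ∧ v ∉ M) :
    ∃ M, MaxIS T M ∧ (∀ w ∈ U, w ∉ M) ∧ ∀ v ∈ S, v ∉ M := by
  classical
  induction S using Finset.induction_on with
  | empty =>
    obtain ⟨M, h1, h2⟩ := hbase
    exact ⟨M, h1, h2, by simp⟩
  | insert _ _ hvS =>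
    rename_i v S' ih
    obtain ⟨N, hN1, hN2, hN3⟩ := ih (fun w hw => hS w (Finset.mem_insert_of_mem hw))
      (fun w hw => hex w (Finset.mem_insert_of_mem hw))
    obtain ⟨Mv, hMv1, hMv2, hMv3⟩ := hex v (Finset.mem_insert_self v S')
    refine ⟨meetF c N Mv, meetF_maxIS hc hN1 hMv1, ?_, ?_⟩
    · intro w hw hmem
      rw [mem_meetF] at hmem
      rcases hmem with ⟨-, hw2⟩ | ⟨hw1, -⟩
      · rcases hw2 with h | h
        · exact hN2 w hw h
        · exact hMv2 w hw h
      · rw [hU w hw] at hw1; exact Bool.noConfusion hw1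
    · intro v' hv' hmem
      rw [mem_meetF] at hmem
      rcases hmem with ⟨hv1, -⟩ | ⟨-, h1, h2⟩
      · rw [hS v' hv'] at hv1; exact Bool.noConfusion hv1
      · rcases Finset.mem_insert.mp hv' with rfl | hv''
        · exact hMv3 h2
        · exact hN3 v' hv'' h1

end helpers

theorem stmt5 {V : Type*} [Fintype V] (T : SimpleGraph V) (hT : T.IsTree) (Z : Set V)
    (h : alphaOn T Zᶜ < alphaOn T Set.univ) :
    ∃ u ∈ Z, ∃ v ∈ Z, alphaOn T ({u, v} : Set V)ᶜ < alphaOn T Set.univ := by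
  classical
  by_contra hcon
  push_neg at hcon
  have hpair : ∀ u ∈ Z, ∀ v ∈ Z, ∃ M, MaxIS T M ∧ u ∉ M ∧ v ∉ M := by
    intro u hu v hv
    obtain ⟨s, hs1, hs2, hs3⟩ := exists_maxIndep T (({u, v} : Set V)ᶜ)
    have hle : alphaOn T (({u, v} : Set V)ᶜ) ≤ alphaOn T Set.univ := by
      obtain ⟨t, ht1, ht2, ht3⟩ := exists_maxIndep T (({u, v} : Set V)ᶜ)
      calc alphaOn T (({u, v} : Set V)ᶜ) = t.card := ht3.symm
        _ ≤ alphaOn T Set.univ := le_alphaOn T (by simp) ht2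
    have heq : alphaOn T (({u, v} : Set V)ᶜ) = alphaOn T Set.univ :=
      le_antisymm hle (hcon u hu v hv)
    refine ⟨s, ⟨hs2, by rw [hs3, heq]⟩, ?_, ?_⟩
    · intro hus
      exact (hs1 (Finset.mem_coe.mpr hus)) (by simp)
    · intro hvs
      exact (hs1 (Finset.mem_coe.mpr hvs)) (by simp)
  obtain ⟨c, hc⟩ := tree_coloring hT
  set ZF := Z.toFinset with hZF
  have hmemZF : ∀ x : V, x ∈ ZF ↔ x ∈ Z := fun x => Set.mem_toFinset
  set ZR := ZF.filter (fun x => c x = false) with hZR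
  set ZL := ZF.filter (fun x => c x = true) with hZL
  have hbase0 : ∃ M, MaxIS T M := by
    obtain ⟨s, _, h2, h3⟩ := exists_maxIndep T Set.univ
    exact ⟨s, h2, h3⟩
  have hstepA : ∃ M, MaxIS T M ∧ ∀ v ∈ ZR, v ∉ M := by
    have := fold_meet hc (∅ : Finset V) (by simp) ZR
      (fun v hv => (Finset.mem_filter.mp hv).2)
      (by obtain ⟨M, hM⟩ := hbase0; exact ⟨M, hM, by simp⟩)
      (fun v hv => by
        have hvZ : v ∈ Z := (hmemZF v).1 (Finset.mem_filter.mp hv).1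
        obtain ⟨M, h1, h2, _⟩ := hpair v hvZ v hvZ
        exact ⟨M, h1, by simp, h2⟩)
    obtain ⟨M, h1, _, h3⟩ := this
    exact ⟨M, h1, h3⟩
  have hstepB : ∀ u ∈ ZL, ∃ M, MaxIS T M ∧ (∀ v ∈ ZR, v ∉ M) ∧ u ∉ M := by
    intro u hu
    have huZ : u ∈ Z := (hmemZF u).1 (Finset.mem_filter.mp hu).1
    have hcu : c u = true := (Finset.mem_filter.mp hu).2
    have := fold_meet hc ({u} : Finset V)
      (by intro w hw; rw [Finset.mem_singleton.mp hw]; exact hcu) ZR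
      (fun v hv => (Finset.mem_filter.mp hv).2)
      (by
        obtain ⟨M, h1, h2, _⟩ := hpair u huZ u huZ
        exact ⟨M, h1, by intro w hw; rw [Finset.mem_singleton.mp hw]; exact h2⟩)
      (fun v hv => by
        have hvZ : v ∈ Z := (hmemZF v).1 (Finset.mem_filter.mp hv).1
        obtain ⟨M, h1, h2, h3⟩ := hpair u huZ v hvZ
        exact ⟨M, h1, by intro w hw; rw [Finset.mem_singleton.mp hw]; exact h2, h3⟩)
    obtain ⟨M, h1, h2, h3⟩ := this
    exact ⟨M, h1, h3, h2 u (Finset.mem_singleton_self u)⟩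
  have hc' : ∀ {u v : V}, T.Adj u v → (!c u) ≠ (!c v) := by
    intro u v hadj hh
    exact hc hadj (by simpa using hh)
  have hstepC : ∃ M, MaxIS T M ∧ (∀ w ∈ ZR, w ∉ M) ∧ ∀ u ∈ ZL, u ∉ M := by
    refine fold_meet hc' ZR ?_ ZL ?_ hstepA ?_
    · intro w hw
      simp [(Finset.mem_filter.mp hw).2]
    · intro u hu
      simp [(Finset.mem_filter.mp hu).2]
    · intro u hu
      exact hstepB u hu
  obtain ⟨M, hM1, hM2, hM3⟩ := hstepC
  have hsub : (↑M : Set V) ⊆ Zᶜ := by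
    intro x hx hxZ
    have hxZF : x ∈ ZF := (hmemZF x).2 hxZ
    by_cases hcx : c x = true
    · exact hM3 x (Finset.mem_filter.mpr ⟨hxZF, hcx⟩) (Finset.mem_coe.mp hx)
    · exact hM2 x (Finset.mem_filter.mpr ⟨hxZF, by simpa using hcx⟩) (Finset.mem_coe.mp hx)
  have hfin : alphaOn T Set.univ ≤ alphaOn T Zᶜ := by
    calc alphaOn T Set.univ = M.card := hM1.2.symm
      _ ≤ alphaOn T Zᶜ := le_alphaOn T hsub hM1.1
  omega
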